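/- Let n ≥ 1 and let K be a symmetric n×n integer matrix with K_{ij} ≤ 0 for all i ≠ j and with every row sum ∑_j K_{ij} ≥ 0 (i.e., K is the Kirchhoff matrix of a quiver). Then for every 1 ≤ k ≤ n, the k-th smallest eigenvalue satisfies λ_k ≤ 2 d_k, where d_1 ≤ … ≤ d_n are the diagonal entries of K listed in increasing order. -/

import Mathlib

open Matrix

private lemma quad_bound {n : ℕ} (A : Matrix (Fin n) (Fin n) ℝ)
    (hsymm : ∀ i j, A i j = A j i)
    (hoff : ∀ i j : Fin n, i ≠ j → A i j ≤ 0)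
    (hrs : ∀ i, ∑ j ∈ Finset.univ.erase i, (-A i j) ≤ A i i)
    (x : Fin n → ℝ) (c : ℝ)
    (hc : ∀ i, x i ≠ 0 → A i i ≤ c) :
    ∑ i, ∑ j, x i * A i j * x j ≤ 2 * c * ∑ i, x i ^ 2 := by
  have split : ∑ i, ∑ j, x i * A i j * x j
      = ∑ i, A i i * x i ^ 2 + ∑ i, ∑ j ∈ Finset.univ.erase i, x i * A i j * x j := by
    rw [← Finset.sum_add_distrib]
    refine Finset.sum_congr rfl fun i _ => ?_
    rw [← Finset.add_sum_erase _ _ (Finset.mem_univ i)]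
    ring_nf
  have offb : ∑ i, ∑ j ∈ Finset.univ.erase i, x i * A i j * x j
      ≤ ∑ i, ∑ j ∈ Finset.univ.erase i, ((-A i j) * x i ^ 2 / 2 + (-A i j) * x j ^ 2 / 2) := by
    refine Finset.sum_le_sum fun i _ => Finset.sum_le_sum fun j hj => ?_
    have hji : j ≠ i := (Finset.mem_erase.mp hj).1
    have ha : 0 ≤ -A i j := by
      have := hoff i j (Ne.symm hji); linarith
    nlinarith [sq_nonneg (x i + x j)]
  have swap : ∑ i, ∑ j ∈ Finset.univ.erase i, (-A i j) * x j ^ 2 / 2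
      = ∑ i, ∑ j ∈ Finset.univ.erase i, (-A i j) * x i ^ 2 / 2 := by
    rw [Finset.sum_comm' (s := Finset.univ) (t := fun i => Finset.univ.erase i)
      (s' := fun j => Finset.univ.erase j) (t' := Finset.univ)
      (fun i j => by simp [Finset.mem_erase, ne_comm])]
    refine Finset.sum_congr rfl fun i _ => Finset.sum_congr rfl fun j _ => ?_
    rw [hsymm j i]
  have offb2 : ∑ i, ∑ j ∈ Finset.univ.erase i, ((-A i j) * x i ^ 2 / 2 + (-A i j) * x j ^ 2 / 2)
      = ∑ i, ∑ j ∈ Finset.univ.erase i, (-A i j) * x i ^ 2 := by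
    simp_rw [Finset.sum_add_distrib]
    rw [swap, ← Finset.sum_add_distrib]
    refine Finset.sum_congr rfl fun i _ => ?_
    rw [← Finset.sum_add_distrib]
    exact Finset.sum_congr rfl fun j _ => by ring
  have offb3 : ∑ i, ∑ j ∈ Finset.univ.erase i, (-A i j) * x i ^ 2 ≤ ∑ i, A i i * x i ^ 2 := by
    refine Finset.sum_le_sum fun i _ => ?_
    rw [← Finset.sum_mul]
    exact mul_le_mul_of_nonneg_right (hrs i) (sq_nonneg _)
  have diag : ∑ i, A i i * x i ^ 2 ≤ ∑ i, c * x i ^ 2 := by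
    refine Finset.sum_le_sum fun i _ => ?_
    by_cases hx : x i = 0
    · simp [hx]
    · exact mul_le_mul_of_nonneg_right (hc i hx) (sq_nonneg _)
  calc ∑ i, ∑ j, x i * A i j * x j
      = ∑ i, A i i * x i ^ 2 + ∑ i, ∑ j ∈ Finset.univ.erase i, x i * A i j * x j := split
    _ ≤ ∑ i, A i i * x i ^ 2 + ∑ i, ∑ j ∈ Finset.univ.erase i, (-A i j) * x i ^ 2 := by
        rw [← offb2] at *; linarith
    _ ≤ ∑ i, A i i * x i ^ 2 + ∑ i, A i i * x i ^ 2 := by linarith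
    _ ≤ ∑ i, c * x i ^ 2 + ∑ i, c * x i ^ 2 := by linarith
    _ = 2 * c * ∑ i, x i ^ 2 := by rw [← Finset.mul_sum]; ring


/-- If `K` is the Kirchhoff matrix of a quiver (symmetric integer matrix with
nonpositive off-diagonal entries and nonnegative row sums) on `n ≥ 1` vertices,
then the `k`-th smallest eigenvalue satisfies `λ_k ≤ 2 d_k`, where
`d_1 ≤ ⋯ ≤ d_n` are the sorted diagonal entries. -/
theorem quiver_eigenvalue_le_two_deg
    (n : ℕ) (hn : 1 ≤ n) (K : Matrix (Fin n) (Fin n) ℤ)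
    (hsym : K.IsSymm)
    (hoff : ∀ i j : Fin n, i ≠ j → K i j ≤ 0)
    (hrow : ∀ i : Fin n, 0 ≤ ∑ j, K i j)
    (hK : (K.map (Int.cast : ℤ → ℝ)).IsHermitian)
    (lam : Fin n → ℝ)
    (hlam : lam = hK.eigenvalues ∘ Tuple.sort hK.eigenvalues)
    (d : Fin n → ℤ)
    (hd : d = (fun i => K i i) ∘ Tuple.sort (fun i => K i i)) :
    ∀ (k : ℕ) (hk1 : 1 ≤ k) (hkn : k ≤ n),
      lam ⟨k - 1, by omega⟩ ≤ 2 * (d ⟨k - 1, by omega⟩ : ℝ) := by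
  intro k hk1 hkn
  set A : Matrix (Fin n) (Fin n) ℝ := K.map (Int.cast : ℤ → ℝ) with hA
  set κ : Fin n := ⟨k - 1, by omega⟩ with hκ
  set σ : Equiv.Perm (Fin n) := Tuple.sort hK.eigenvalues with hσ
  set τ : Equiv.Perm (Fin n) := Tuple.sort (fun i => K i i) with hτ
  set u := hK.eigenvectorBasis with hu
  set bF := EuclideanSpace.basisFun (Fin n) ℝ with hbF
  set m : ℕ := n - (k - 1) with hm
  -- families
  set g : Fin m → Fin n := fun t => ⟨k - 1 + t.1, by omega⟩ with hg
  have hginj : Function.Injective g := by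
    intro a b hab
    have := congrArg Fin.val hab
    simp only [hg] at this
    exact Fin.ext (by omega)
  set famV : Fin k → EuclideanSpace ℝ (Fin n) :=
    fun t => bF (τ (Fin.castLE hkn t)) with hfamV
  set famW : Fin m → EuclideanSpace ℝ (Fin n) := fun t => u (σ (g t)) with hfamW
  set V := Submodule.span ℝ (Set.range famV) with hV
  set W := Submodule.span ℝ (Set.range famW) with hW
  -- dimensions
  have hVinj : Function.Injective (fun t : Fin k => τ (Fin.castLE hkn t)) :=
    fun a b hab => Fin.castLE_injective hkn (τ.injective hab)
  have hWinj : Function.Injective (fun t : Fin m => σ (g t)) :=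
    fun a b hab => hginj (σ.injective hab)
  have hVdim : Module.finrank ℝ V = k := by
    rw [hV]
    have hli : LinearIndependent ℝ famV := by
      have : famV = ⇑bF.toBasis ∘ (fun t : Fin k => τ (Fin.castLE hkn t)) := by
        funext t; simp [hfamV, OrthonormalBasis.coe_toBasis]
      rw [this]
      exact bF.toBasis.linearIndependent.comp _ hVinj
    rw [finrank_span_eq_card hli, Fintype.card_fin]
  have hWdim : Module.finrank ℝ W = m := by
    rw [hW]
    have hli : LinearIndependent ℝ famW := by
      have : famW = ⇑u.toBasis ∘ (fun t : Fin m => σ (g t)) := by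
        funext t; simp [hfamW, OrthonormalBasis.coe_toBasis]
      rw [this]
      exact u.toBasis.linearIndependent.comp _ hWinj
    rw [finrank_span_eq_card hli, Fintype.card_fin]
  -- intersection nonzero
  have hsupfin := Submodule.finrank_sup_add_finrank_inf_eq V W
  have hsuple : Module.finrank ℝ ↥(V ⊔ W) ≤ n := by
    have := Submodule.finrank_le (V ⊔ W)
    rwa [finrank_euclideanSpace_fin] at this
  have hinfpos : 1 ≤ Module.finrank ℝ ↥(V ⊓ W) := by omega
  have hne : V ⊓ W ≠ ⊥ := by
    intro h
    rw [h, finrank_bot] at hinfpos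
    omega
  obtain ⟨x, hxVW, hx0⟩ := (Submodule.ne_bot_iff _).mp hne
  have hxV : x ∈ V := hxVW.1
  have hxW : x ∈ W := hxVW.2
  -- support of x (from V)
  have hsupp : ∀ i : Fin n, (∀ t : Fin k, τ (Fin.castLE hkn t) ≠ i) → x i = 0 := by
    intro i hi
    have hrange : Set.range famV
        = ⇑bF.toBasis '' Set.range (fun t : Fin k => τ (Fin.castLE hkn t)) := by
      rw [OrthonormalBasis.coe_toBasis, ← Set.range_comp]
      rfl
    rw [hV, hrange] at hxV
    have hs := (Module.Basis.mem_span_image _).mp hxV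
    have hnot : i ∉ (bF.toBasis.repr x).support := by
      intro hmem
      obtain ⟨t, ht⟩ := hs hmem
      exact hi t ht
    have h0 := Finsupp.notMem_support_iff.mp hnot
    rwa [OrthonormalBasis.coe_toBasis_repr_apply, EuclideanSpace.basisFun_repr] at h0
  -- coefficients of x in eigenbasis
  set c : Fin n → ℝ := fun j => u.repr x j with hc
  have hcoef : ∀ j : Fin n, (∀ t : Fin m, σ (g t) ≠ j) → c j = 0 := by
    intro j hj
    have hrange : Set.range famW
        = ⇑u.toBasis '' Set.range (fun t : Fin m => σ (g t)) := by
      rw [OrthonormalBasis.coe_toBasis, ← Set.range_comp]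
      rfl
    rw [hW, hrange] at hxW
    have hs := (Module.Basis.mem_span_image _).mp hxW
    have hnot : j ∉ (u.toBasis.repr x).support := by
      intro hmem
      obtain ⟨t, ht⟩ := hs hmem
      exact hj t ht
    have h0 := Finsupp.notMem_support_iff.mp hnot
    rwa [OrthonormalBasis.coe_toBasis_repr_apply] at h0
  have hxsum : ∑ j, c j • u j = x := u.sum_repr x
  -- pointwise expansion
  have hxp : ∀ p : Fin n, x p = ∑ j, c j * u j p := by
    intro p
    have h := congrArg
      (fun z : EuclideanSpace ℝ (Fin n) => (inner ℝ (EuclideanSpace.single p (1:ℝ)) z : ℝ)) hxsum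
    simpa [inner_sum, inner_smul_right, EuclideanSpace.inner_single_left] using h.symm
  have hcj : ∀ j : Fin n, ∑ p, u j p * x p = c j := by
    intro j
    have : (inner ℝ (u j) x : ℝ) = ∑ p, u j p * x p := by
      simp [PiLp.inner_apply, RCLike.inner_apply, mul_comm]
    rw [hc]
    simp only [OrthonormalBasis.repr_apply_apply]
    rw [this]
  have hlam' : lam = hK.eigenvalues ∘ ⇑σ := hlam
  -- expansion of A *ᵥ x
  have hAxp : ∀ p : Fin n, (A *ᵥ x) p = ∑ j, c j * (hK.eigenvalues j * u j p) := by
    intro p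
    calc (A *ᵥ x) p = ∑ q, A p q * x q := by simp [Matrix.mulVec, dotProduct]
      _ = ∑ q, ∑ j, A p q * (c j * u j q) := by
          refine Finset.sum_congr rfl fun q _ => ?_
          rw [hxp q, Finset.mul_sum]
      _ = ∑ j, ∑ q, A p q * (c j * u j q) := Finset.sum_comm
      _ = ∑ j, c j * ∑ q, A p q * u j q := by
          refine Finset.sum_congr rfl fun j _ => ?_
          rw [Finset.mul_sum]
          exact Finset.sum_congr rfl fun q _ => by ring
      _ = ∑ j, c j * (hK.eigenvalues j * u j p) := by
          refine Finset.sum_congr rfl fun j _ => ?_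
          congr 1
          have h := congrFun (hK.mulVec_eigenvectorBasis j) p
          simpa [Matrix.mulVec, dotProduct] using h
  have hQ1 : ∑ i, ∑ j, x i * A i j * x j = ∑ j, hK.eigenvalues j * c j ^ 2 := by
    calc ∑ i, ∑ j, x i * A i j * x j = ∑ p, x p * (A *ᵥ x) p := by
          refine Finset.sum_congr rfl fun p _ => ?_
          simp [Matrix.mulVec, dotProduct, Finset.mul_sum, mul_assoc]
      _ = ∑ p, ∑ j, x p * (c j * (hK.eigenvalues j * u j p)) := by
          refine Finset.sum_congr rfl fun p _ => ?_
          rw [hAxp p, Finset.mul_sum]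
      _ = ∑ j, ∑ p, x p * (c j * (hK.eigenvalues j * u j p)) := Finset.sum_comm
      _ = ∑ j, hK.eigenvalues j * c j * ∑ p, u j p * x p := by
          refine Finset.sum_congr rfl fun j _ => ?_
          rw [Finset.mul_sum]
          exact Finset.sum_congr rfl fun p _ => by ring
      _ = ∑ j, hK.eigenvalues j * c j ^ 2 := by
          refine Finset.sum_congr rfl fun j _ => ?_
          rw [hcj j]; ring
  have hS : ∑ p, x p ^ 2 = ∑ j, c j ^ 2 := by
    calc ∑ p, x p ^ 2 = ∑ p, ∑ j, x p * (c j * u j p) := by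
          refine Finset.sum_congr rfl fun p _ => ?_
          calc x p ^ 2 = x p * x p := sq (x p)
            _ = x p * ∑ j, c j * u j p := by rw [← hxp p]
            _ = ∑ j, x p * (c j * u j p) := Finset.mul_sum _ _ _
      _ = ∑ j, ∑ p, x p * (c j * u j p) := Finset.sum_comm
      _ = ∑ j, c j * ∑ p, u j p * x p := by
          refine Finset.sum_congr rfl fun j _ => ?_
          rw [Finset.mul_sum]
          exact Finset.sum_congr rfl fun p _ => by ring
      _ = ∑ j, c j ^ 2 := by
          refine Finset.sum_congr rfl fun j _ => ?_
          rw [hcj j]; ring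
  have hpos : 0 < ∑ p, x p ^ 2 := by
    obtain ⟨p, hp⟩ : ∃ p, x p ≠ 0 := by
      by_contra h
      push_neg at h
      exact hx0 (by ext p; exact h p)
    exact Finset.sum_pos' (fun q _ => sq_nonneg _) ⟨p, Finset.mem_univ p, by positivity⟩
  -- spectral lower bound
  have hlmono : Monotone lam := by
    rw [hlam']
    exact Tuple.monotone_sort _
  have hlow : lam κ * ∑ j, c j ^ 2 ≤ ∑ j, hK.eigenvalues j * c j ^ 2 := by
    rw [Finset.mul_sum]
    refine Finset.sum_le_sum fun j _ => ?_
    by_cases hcz : c j = 0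
    · simp [hcz]
    · obtain ⟨t, ht⟩ : ∃ t : Fin m, σ (g t) = j := by
        by_contra h
        push_neg at h
        exact hcz (hcoef j h)
      have hκle : κ ≤ g t := by
        simp only [hκ, hg, Fin.mk_le_mk]
        omega
      have hμ : hK.eigenvalues j = lam (g t) := by
        rw [hlam']
        simp [← ht]
      rw [hμ]
      exact mul_le_mul_of_nonneg_right (hlmono hκle) (sq_nonneg _)
  -- quadratic upper bound
  have hAsymm : ∀ i j, A i j = A j i := by
    intro i j
    have := hsym.apply j i
    simp only [hA, Matrix.map_apply]
    exact_mod_cast this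
  have hAoff : ∀ i j : Fin n, i ≠ j → A i j ≤ 0 := by
    intro i j hij
    simp only [hA, Matrix.map_apply]
    exact_mod_cast hoff i j hij
  have hArs : ∀ i, ∑ j ∈ Finset.univ.erase i, -A i j ≤ A i i := by
    intro i
    have h0 := hrow i
    rw [← Finset.add_sum_erase _ _ (Finset.mem_univ i)] at h0
    have hZ : ∑ j ∈ Finset.univ.erase i, -K i j ≤ K i i := by
      have : ∑ j ∈ Finset.univ.erase i, -K i j = -∑ j ∈ Finset.univ.erase i, K i j := by
        simp
      rw [this]
      linarith
    calc ∑ j ∈ Finset.univ.erase i, -A i j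
        = ((∑ j ∈ Finset.univ.erase i, -K i j : ℤ) : ℝ) := by
          push_cast [hA, Matrix.map_apply]
          rfl
      _ ≤ ((K i i : ℤ) : ℝ) := by exact_mod_cast hZ
      _ = A i i := by simp [hA, Matrix.map_apply]
  have hdmono : Monotone d := by
    rw [hd]
    exact Tuple.monotone_sort _
  have hAc : ∀ i, x i ≠ 0 → A i i ≤ ((d κ : ℤ) : ℝ) := by
    intro i hxi
    obtain ⟨t, ht⟩ : ∃ t : Fin k, τ (Fin.castLE hkn t) = i := by
      by_contra h
      push_neg at h
      exact hxi (hsupp i h)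
    have h1 : d (Fin.castLE hkn t) ≤ d κ := by
      refine hdmono ?_
      simp only [hκ, Fin.le_def, Fin.coe_castLE]
      have := t.2
      omega
    have h2 : K i i = d (Fin.castLE hkn t) := by
      rw [hd]
      simp [← ht]
    have h3 : K i i ≤ d κ := h2 ▸ h1
    calc A i i = ((K i i : ℤ) : ℝ) := by simp [hA, Matrix.map_apply]
      _ ≤ _ := by exact_mod_cast h3
  have hquad := quad_bound A hAsymm hAoff hArs x ((d κ : ℤ) : ℝ) hAc
  have hposc : 0 < ∑ j, c j ^ 2 := hS ▸ hpos
  have hfinal : lam κ * ∑ j, c j ^ 2 ≤ (2 * ((d κ : ℤ) : ℝ)) * ∑ j, c j ^ 2 := by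
    have := hquad
    rw [hQ1, hS] at this
    linarith
  have : lam κ ≤ 2 * ((d κ : ℤ) : ℝ) := le_of_mul_le_mul_right hfinal hposc
  exact this
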